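/- Let T : [0,1) → [0,1) be an interval translation map with r = 2 branches: T(x) = x + γ₁ on [0,β) and T(x) = x + γ₂ on [β,1), with γ₁ ≥ 0 ≥ γ₂ (so that T maps into [0,1)). Then T is of finite type, i.e., there exists n with T^{n+1}([0,1)) = Tⁿ([0,1)). -/

import Mathlib

/-- Every interval translation map on 2 intervals is of finite type. -/
theorem itm_two_branches_finite_type (β γ₁ γ₂ : ℝ) (hβ : β ∈ Set.Ioo (0:ℝ) 1)
    (h1 : 0 ≤ γ₁) (h2 : γ₂ ≤ 0)
    (T : ℝ → ℝ)
    (hT1 : ∀ x ∈ Set.Ico (0:ℝ) β, T x = x + γ₁)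
    (hT2 : ∀ x ∈ Set.Ico β (1:ℝ), T x = x + γ₂)
    (hmaps : Set.MapsTo T (Set.Ico (0:ℝ) 1) (Set.Ico 0 1)) :
    ∃ n : ℕ, T^[n + 1] '' Set.Ico (0:ℝ) 1 = T^[n] '' Set.Ico (0:ℝ) 1 := by
  obtain ⟨hβ0, hβ1⟩ := hβ
  have hγ₁lt : γ₁ < 1 := by
    have h0 : T 0 = 0 + γ₁ := hT1 0 ⟨le_rfl, hβ0⟩
    have hh := (hmaps ⟨le_rfl, one_pos⟩).2
    rw [h0] at hh; linarith
  have hβγ₂ : 0 ≤ β + γ₂ := by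
    have h0 : T β = β + γ₂ := hT2 β ⟨le_rfl, hβ1⟩
    have hh := (hmaps ⟨hβ0.le, hβ1⟩).1
    rwa [h0] at hh
  have hβγ₁ : β + γ₁ ≤ 1 := by
    by_contra hcon
    push_neg at hcon
    have hx0 : 0 ≤ (β + 1 - γ₁)/2 := by linarith
    have hxβ : (β + 1 - γ₁)/2 < β := by linarith
    have hTx : T ((β + 1 - γ₁)/2) = (β + 1 - γ₁)/2 + γ₁ := hT1 _ ⟨hx0, hxβ⟩
    have hh := (hmaps ⟨hx0, by linarith⟩).2
    rw [hTx] at hh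
    linarith
  set c : ℝ := if γ₁ = 0 then 0 else β + γ₂ with hc
  set d : ℝ := if γ₂ = 0 then 1 else β + γ₁ with hd
  have hc0 : 0 ≤ c := by rw [hc]; split_ifs <;> linarith
  have hcβ : c ≤ β := by rw [hc]; split_ifs <;> linarith
  have hβd : β ≤ d := by rw [hd]; split_ifs <;> linarith
  have hd1 : d ≤ 1 := by rw [hd]; split_ifs <;> linarith
  have hβγ₁d : β + γ₁ ≤ d := by rw [hd]; split_ifs <;> linarith
  have hcβγ₂ : c ≤ β + γ₂ := by rw [hc]; split_ifs <;> linarith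
  -- J = [c, d) is forward invariant
  have hTin : ∀ x, c ≤ x → x < d → c ≤ T x ∧ T x < d := by
    intro x hcx hxd
    rcases lt_or_ge x β with hxβ | hβx
    · rw [hT1 x ⟨le_trans hc0 hcx, hxβ⟩]
      constructor <;> linarith
    · rw [hT2 x ⟨hβx, lt_of_lt_of_le hxd hd1⟩]
      constructor <;> linarith
  -- trichotomy for orbits
  have key : ∀ n : ℕ, ∀ x : ℝ, 0 ≤ x → x < 1 →
      (x + n * γ₁ < c ∧ T^[n] x = x + n * γ₁) ∨
      (d ≤ x + n * γ₂ ∧ T^[n] x = x + n * γ₂) ∨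
      (c ≤ T^[n] x ∧ T^[n] x < d) := by
    intro n
    induction n with
    | zero =>
      intro x hx0 hx1
      rcases lt_or_ge x c with h | h
      · left
        constructor
        · simpa using h
        · simp
      · rcases le_or_gt d x with h' | h'
        · right; left
          constructor
          · simpa using h'
          · simp
        · right; right
          constructor
          · simpa using h
          · simpa using h'
    | succ n ih =>
      intro x hx0 hx1
      rcases ih x hx0 hx1 with ⟨hA1, hA2⟩ | ⟨hA1, hA2⟩ | ⟨hA1, hA2⟩
      · -- below c, climbing by γ₁
        have hγ₁pos : 0 < γ₁ := by
          rcases h1.eq_or_lt with he | hl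
          · exfalso
            rw [hc, if_pos he.symm, ← he] at hA1
            have : (0:ℝ) ≤ (n:ℝ) * γ₁ := by rw [← he]; simp
            linarith
          · exact hl
        have hcval : c = β + γ₂ := by rw [hc, if_neg (ne_of_gt hγ₁pos)]
        have hy0 : 0 ≤ x + n * γ₁ := by
          have : (0:ℝ) ≤ (n:ℝ) * γ₁ := mul_nonneg (Nat.cast_nonneg n) h1
          linarith
        have hyβ : x + n * γ₁ < β := lt_of_lt_of_le hA1 hcβ
        have hTy : T (x + n * γ₁) = (x + n * γ₁) + γ₁ := hT1 _ ⟨hy0, hyβ⟩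
        have hstep : T^[n+1] x = (x + n * γ₁) + γ₁ := by
          rw [Function.iterate_succ_apply', hA2, hTy]
        have hexp : x + ((n:ℕ)+1 : ℕ) * γ₁ = (x + n * γ₁) + γ₁ := by push_cast; ring
        rcases lt_or_ge ((x + n * γ₁) + γ₁) c with hcase | hcase
        · left
          constructor
          · rw [hexp]; exact hcase
          · rw [hstep, hexp]
        · right; right
          constructor
          · rw [hstep]; exact hcase
          · rw [hstep]
            have : x + n * γ₁ < β + γ₂ := by rw [← hcval]; exact hA1
            linarith
      · -- above d, descending by γ₂
        have hγ₂neg : γ₂ < 0 := by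
          rcases h2.lt_or_eq with hl | he
          · exact hl
          · exfalso
            rw [hd, if_pos he, he] at hA1
            simp at hA1
            linarith
        have hdval : d = β + γ₁ := by rw [hd, if_neg (ne_of_lt hγ₂neg)]
        have hy1 : x + n * γ₂ < 1 := by
          have : (n:ℝ) * γ₂ ≤ 0 := mul_nonpos_of_nonneg_of_nonpos (Nat.cast_nonneg n) h2
          linarith
        have hyβ : β ≤ x + n * γ₂ := le_trans hβd hA1
        have hTy : T (x + n * γ₂) = (x + n * γ₂) + γ₂ := hT2 _ ⟨hyβ, hy1⟩
        have hstep : T^[n+1] x = (x + n * γ₂) + γ₂ := by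
          rw [Function.iterate_succ_apply', hA2, hTy]
        have hexp : x + ((n:ℕ)+1 : ℕ) * γ₂ = (x + n * γ₂) + γ₂ := by push_cast; ring
        rcases le_or_gt d ((x + n * γ₂) + γ₂) with hcase | hcase
        · right; left
          constructor
          · rw [hexp]; exact hcase
          · rw [hstep, hexp]
        · right; right
          constructor
          · rw [hstep]
            have : β + γ₁ ≤ x + n * γ₂ := by rw [← hdval]; exact hA1
            linarith
          · rw [hstep]; exact hcase
      · right; right
        rw [Function.iterate_succ_apply']
        exact hTin _ hA1 hA2
  -- T is surjective on J = [c, d)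
  have hJsurj : ∀ y, c ≤ y → y < d → ∃ x, c ≤ x ∧ x < d ∧ T x = y := by
    intro y hcy hyd
    by_cases hγ₁z : γ₁ = 0
    · by_cases hγ₂z : γ₂ = 0
      · refine ⟨y, hcy, hyd, ?_⟩
        rcases lt_or_ge y β with h | h
        · rw [hT1 y ⟨le_trans hc0 hcy, h⟩, hγ₁z, add_zero]
        · rw [hT2 y ⟨h, lt_of_lt_of_le hyd hd1⟩, hγ₂z, add_zero]
      · have hdval : d = β + γ₁ := by rw [hd, if_neg hγ₂z]
        refine ⟨y, hcy, hyd, ?_⟩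
        have hyβ : y < β := by rw [hdval, hγ₁z, add_zero] at hyd; exact hyd
        rw [hT1 y ⟨le_trans hc0 hcy, hyβ⟩, hγ₁z, add_zero]
    · have hcval : c = β + γ₂ := by rw [hc, if_neg hγ₁z]
      by_cases hγ₂z : γ₂ = 0
      · refine ⟨y, hcy, hyd, ?_⟩
        have hby : β ≤ y := by rw [hcval, hγ₂z, add_zero] at hcy; exact hcy
        rw [hT2 y ⟨hby, lt_of_lt_of_le hyd hd1⟩, hγ₂z, add_zero]
      · have hdval : d = β + γ₁ := by rw [hd, if_neg hγ₂z]
        have hcy' : β + γ₂ ≤ y := by rw [← hcval]; exact hcy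
        have hyd' : y < β + γ₁ := by rw [← hdval]; exact hyd
        rcases lt_or_ge y (β + γ₁ + γ₂) with hm | hm
        · refine ⟨y - γ₂, by linarith, by rw [hdval]; linarith, ?_⟩
          have hb1 : β ≤ y - γ₂ := by linarith
          have hb2 : y - γ₂ < 1 := by linarith [hβγ₁]
          rw [hT2 _ ⟨hb1, hb2⟩]; ring
        · refine ⟨y - γ₁, by rw [hcval]; linarith, by linarith, ?_⟩
          have hb1 : 0 ≤ y - γ₁ := by linarith
          have hb2 : y - γ₁ < β := by linarith
          rw [hT1 _ ⟨hb1, hb2⟩]; ring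
  -- J is contained in every image
  have hJsubX : ∀ n : ℕ, Set.Ico c d ⊆ T^[n] '' Set.Ico 0 1 := by
    intro n
    induction n with
    | zero =>
      intro y hy
      exact ⟨y, ⟨le_trans hc0 hy.1, lt_of_lt_of_le hy.2 hd1⟩, rfl⟩
    | succ n ihn =>
      intro y hy
      obtain ⟨x, hx1, hx2, hxy⟩ := hJsurj y hy.1 hy.2
      obtain ⟨z, hz, hzx⟩ := ihn ⟨hx1, hx2⟩
      exact ⟨z, hz, by rw [Function.iterate_succ_apply', hzx, hxy]⟩
  set N : ℕ := ⌈γ₁⁻¹⌉₊ + ⌈(-γ₂)⁻¹⌉₊ with hN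
  refine ⟨N, ?_⟩
  have hXN : T^[N] '' Set.Ico 0 1 ⊆ Set.Ico c d := by
    rintro _ ⟨x, ⟨hx0, hx1⟩, rfl⟩
    rcases key N x hx0 hx1 with ⟨hA1, hA2⟩ | ⟨hA1, hA2⟩ | hok
    · exfalso
      rcases h1.eq_or_lt with he | hpos
      · rw [hc, if_pos he.symm, ← he] at hA1
        have : (0:ℝ) ≤ (N:ℝ) * γ₁ := by rw [← he]; simp
        linarith
      · have hle1 : (⌈γ₁⁻¹⌉₊ : ℝ) ≤ (N:ℝ) := by
          exact_mod_cast Nat.le_add_right _ _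
        have hNge : γ₁⁻¹ ≤ (N:ℝ) := le_trans (Nat.le_ceil _) hle1
        rw [inv_eq_one_div] at hNge
        have h1N : (1:ℝ) ≤ (N:ℝ) * γ₁ := (div_le_iff₀ hpos).mp hNge
        have : c ≤ β := hcβ
        linarith
    · exfalso
      rcases h2.lt_or_eq with hneg | he
      · have hle1 : (⌈(-γ₂)⁻¹⌉₊ : ℝ) ≤ (N:ℝ) := by
          exact_mod_cast Nat.le_add_left _ _
        have hNge : (-γ₂)⁻¹ ≤ (N:ℝ) := le_trans (Nat.le_ceil _) hle1
        rw [inv_eq_one_div] at hNge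
        have h1N : (1:ℝ) ≤ (N:ℝ) * (-γ₂) := (div_le_iff₀ (by linarith)).mp hNge
        rw [mul_neg] at h1N
        linarith [hβd]
      · rw [hd, if_pos he, he] at hA1
        simp at hA1
        linarith
    · exact hok
  apply Set.Subset.antisymm
  · rw [Function.iterate_succ, Set.image_comp]
    exact Set.image_mono hmaps.image_subset
  · exact hXN.trans (hJsubX (N + 1))
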